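/- Let a, b, σ, T > 0, set γ = √(a² + 2σ²), and for t ∈ [0,T] define D(t) = (γ − a) + (γ + a)·exp(γ(T − t)), B(t) = 2(1 − exp(γ(T − t)))/D(t), and A(t) = (2γ·exp((γ + a)(T − t)/2)/D(t))^(2ab/σ²). Then A(T) = 1, A is differentiable on [0,T], and A'(t) = −a·b·B(t)·A(t) for all t ∈ [0,T]. -/

import Mathlib

open Real

/-- Properties of the coefficient function `A` in the closed-form CIR bond price:
with `γ = √(a² + 2σ²)`, `D t = (γ - a) + (γ + a)·exp(γ(T - t))`,
`B t = 2(1 - exp(γ(T - t)))/D t` and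
`A t = (2γ·exp((γ + a)(T - t)/2)/D t)^(2ab/σ²)`, we have `A T = 1` and
`A' = -a·b·B·A` on `[0,T]`. -/
theorem cir_A_ode (a b σ T : ℝ) (ha : 0 < a) (hb : 0 < b) (hσ : 0 < σ) (hT : 0 < T)
    (γ : ℝ) (hγ : γ = Real.sqrt (a ^ 2 + 2 * σ ^ 2))
    (D B A : ℝ → ℝ)
    (hD : ∀ t, D t = (γ - a) + (γ + a) * Real.exp (γ * (T - t)))
    (hB : ∀ t, B t = 2 * (1 - Real.exp (γ * (T - t))) / D t)
    (hA : ∀ t, A t =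
      (2 * γ * Real.exp ((γ + a) * (T - t) / 2) / D t) ^ (2 * a * b / σ ^ 2)) :
    A T = 1 ∧
    (∀ t ∈ Set.Icc (0 : ℝ) T, HasDerivAt A (-(a * b * B t * A t)) t) := by
  have hγ2 : γ ^ 2 = a ^ 2 + 2 * σ ^ 2 := by
    rw [hγ]; exact Real.sq_sqrt (by positivity)
  have hγpos : 0 < γ := by
    rw [hγ]; exact Real.sqrt_pos.2 (by positivity)
  have haγ : a < γ := by nlinarith
  have hDpos : ∀ t, 0 < D t := fun t => by
    rw [hD]
    have := Real.exp_pos (γ * (T - t))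
    nlinarith
  have hAfun : A = fun s =>
      (2 * γ * Real.exp ((γ + a) * (T - s) / 2) / D s) ^ (2 * a * b / σ ^ 2) :=
    funext hA
  constructor
  · have hDT : D T = 2 * γ := by rw [hD]; simp; ring
    rw [hA, hDT]
    simp only [sub_self, mul_zero, zero_div, Real.exp_zero, mul_one]
    rw [div_self (by positivity), Real.one_rpow]
  · intro t _
    set p := 2 * a * b / σ ^ 2 with hp
    set e := Real.exp (γ * (T - t)) with he
    set E := Real.exp ((γ + a) * (T - t) / 2) with hE
    have hEpos : 0 < E := Real.exp_pos _
    have hepos : 0 < e := Real.exp_pos _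
    -- derivative of D
    have hDder : HasDerivAt D (-(γ * (γ + a) * e)) t := by
      have h1 : HasDerivAt (fun s => γ * (T - s)) (-γ) t := by
        simpa using ((hasDerivAt_const t T).sub (hasDerivAt_id t)).const_mul γ
      have h2 := (h1.exp.const_mul (γ + a)).const_add (γ - a)
      have hfun : D = fun s => (γ - a) + (γ + a) * Real.exp (γ * (T - s)) := funext hD
      rw [hfun]
      refine h2.congr_deriv ?_
      rw [← he]; ring
    -- derivative of numerator
    have hNder : HasDerivAt (fun s => 2 * γ * Real.exp ((γ + a) * (T - s) / 2))
        (-(γ * (γ + a) * E)) t := by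
      have h1 : HasDerivAt (fun s => (γ + a) * (T - s) / 2) ((-a + -γ) / 2) t := by
        simpa using (((hasDerivAt_const t T).sub (hasDerivAt_id t)).const_mul (γ + a)).div_const 2
      have h2 := h1.exp.const_mul (2 * γ)
      refine h2.congr_deriv ?_
      rw [← hE]; ring
    have hDne : D t ≠ 0 := (hDpos t).ne'
    have hfder := hNder.div hDder hDne
    have hfpos : 0 < 2 * γ * E / D t :=
      div_pos (by positivity) (hDpos t)
    have hAder := hfder.rpow_const (p := p) (Or.inl hfpos.ne')
    rw [hAfun]
    refine hAder.congr_deriv ?_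
    symm
    rw [hB t]
    simp only [Pi.div_apply, ← hE, ← he]
    rw [Real.rpow_sub_one hfpos.ne']
    have hkey : (-(γ * (γ + a) * E) * D t - 2 * γ * E * -(γ * (γ + a) * e)) / D t ^ 2 * p
        / (2 * γ * E / D t) = -(a * b * (2 * (1 - e) / D t)) := by
      rw [hp, hD t, ← he]
      have hDne' : (γ - a) + (γ + a) * e ≠ 0 := by rw [hD t, ← he] at hDne; exact hDne
      field_simp
      linear_combination (e - 1) * hγ2
    set F := (2 * γ * E / D t) ^ p with hF
    linear_combination (-F) * hkey
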